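/- Let J and Ā be as in the definition of F_{J,Ā}. There exists a sequence (f_α)_{α<ω₁} of functions in F_{J,Ā} such that for every triple (i, m, F) with m ≤ 2^i and F ∈ [ω₁]^m, there exists an infinite set B_{i,m,F} ⊆ ω \ i such that for all distinct α, β ∈ F and all n ∈ B_{i,m,F}, the binary sequences σ_{f_α,n,i} and σ_{f_β,n,i} are distinct. -/

import Mathlib

open Cardinal



abbrev Con12 : Type := Σ i N : ℕ, (Fin N → Bool) → Fin (2 ^ i)

instance : Nonempty Con12 := ⟨⟨0, 0, fun _ => ⟨0, Nat.one_pos⟩⟩⟩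

noncomputable def phi12 : ℕ → Con12 :=
  fun n => (exists_surjective_nat Con12).choose (Nat.unpair n).1

lemma phi12_infinite (c : Con12) : {n | phi12 n = c}.Infinite := by
  obtain ⟨a, ha⟩ := (exists_surjective_nat Con12).choose_spec c
  apply Set.infinite_of_injective_forall_mem (f := fun b => Nat.pair a b)
  · intro b b' h
    exact (Nat.pair_eq_pair.1 h).2
  · intro b
    simp only [Set.mem_setOf_eq, phi12, Nat.unpair_pair, ha]

noncomputable def val12 (x : ℕ → Bool) (n : ℕ) : ℕ :=
  ((phi12 n).2.2 (fun s => x s.val)).val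

noncomputable def pre12 (x : ℕ → Bool) (n i : ℕ) : List Bool :=
  List.ofFn (fun t : Fin i => (val12 x n).testBit t.val)

lemma pre12_length (x : ℕ → Bool) (n i : ℕ) : (pre12 x n i).length = i := by
  simp [pre12]

lemma pre12_take {x : ℕ → Bool} {n : ℕ} {i' i : ℕ} (h : i' ≤ i) :
    pre12 x n i' = (pre12 x n i).take i' := by
  apply List.ext_getElem
  · simp [pre12, Nat.min_eq_left h]
  · intro t h1 h2
    simp [pre12]

lemma pre12_prefix {x : ℕ → Bool} {n : ℕ} {i' i : ℕ} (h : i' ≤ i) :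
    pre12 x n i' <+: pre12 x n i := by
  rw [pre12_take h]; exact List.take_prefix _ _

lemma pre12_succ (x : ℕ → Bool) (n m : ℕ) :
    pre12 x n (m + 1) = pre12 x n m ++ [(val12 x n).testBit m] := by
  rw [pre12, List.ofFn_succ', List.concat_eq_append]
  simp [pre12]

lemma pre12_ne {x y : ℕ → Bool} {n i : ℕ} (hx : val12 x n < 2 ^ i)
    (hy : val12 y n < 2 ^ i) (hne : val12 x n ≠ val12 y n) :
    pre12 x n i ≠ pre12 y n i := by
  intro h
  apply hne
  apply Nat.eq_of_testBit_eq
  intro t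
  by_cases ht : t < i
  · have := List.ofFn_injective h
    exact congrFun this ⟨t, ht⟩
  · rw [Nat.testBit_eq_false_of_lt (lt_of_lt_of_le hx (Nat.pow_le_pow_right (by norm_num) (le_of_not_gt ht))),
      Nat.testBit_eq_false_of_lt (lt_of_lt_of_le hy (Nat.pow_le_pow_right (by norm_num) (le_of_not_gt ht)))]

noncomputable def idx12 (j : ℕ → ℕ) (k : ℕ) : ℕ :=
  Nat.findGreatest (fun n => j n ≤ k) k

open Classical in
noncomputable def lev12 (j l : ℕ → ℕ) (T : ℕ → List Bool → Set ℕ) (x : ℕ → Bool) (k : ℕ) : ℕ :=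
  Nat.findGreatest (fun i => k ∈ T (idx12 j k) (pre12 x (idx12 j k) i)) (l (idx12 j k))

lemma idx12_eq {j : ℕ → ℕ} (hj0 : j 0 = 0) (hj : StrictMono j) {n k : ℕ}
    (hk : k ∈ Set.Ico (j n) (j (n + 1))) : idx12 j k = n := by
  classical
  have h1 : n ≤ idx12 j k :=
    Nat.le_findGreatest (le_trans hj.le_apply hk.1) hk.1
  rcases Nat.lt_or_ge (idx12 j k) (n+1) with h | h
  · omega
  · exfalso
    have hP : j (idx12 j k) ≤ k := by
      have hne : idx12 j k ≠ 0 := by omega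
      unfold idx12 at hne ⊢
      exact Nat.findGreatest_of_ne_zero (P := fun n => j n ≤ k) (n := k) rfl hne
    exact absurd (lt_of_le_of_lt (le_trans (hj.monotone h) hP) hk.2) (lt_irrefl _)


lemma aleph1_embed_cantor : Nonempty ((Cardinal.aleph 1).ord.ToType ↪ (ℕ → Bool)) := by
  rw [← Cardinal.lift_mk_le', Cardinal.mk_toType, Cardinal.card_ord, Cardinal.lift_uzero]
  have h1 : #(ℕ → Bool) = Cardinal.continuum := by
    rw [Cardinal.mk_arrow]
    simp [← Cardinal.two_power_aleph0]
  rw [h1, Cardinal.lift_continuum]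
  exact Cardinal.aleph_one_le_continuum



/-- with `j`, `l`, tree system `T` as in the definition of `F_{J,Ā}`,
there is an ω₁-sequence of functions in `F_{J,Ā}` such that for every triple `(i, m, F)`
with `m ≤ 2^i` and `F ∈ [ω₁]^m`, there is an infinite `B ⊆ ω \ i` such that for all
distinct `α, β ∈ F` and all `n ∈ B`, the level-`i` codes of `f_α` and `f_β` at `n` are
distinct (equivalently, the sets `{k ∈ J_n : f_α k ≥ i}` and `{k ∈ J_n : f_β k ≥ i}`
are distinct). -/
theorem stmt_12 (j : ℕ → ℕ) (hj0 : j 0 = 0) (hj : StrictMono j)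
    (l : ℕ → ℕ) (hl : ∀ n, 0 < l n ∧ n ≤ l n ∧ j (n + 1) - j n = 2 ^ l n)
    (T : ℕ → List Bool → Set ℕ)
    (hT1 : ∀ n, ∀ m ≤ l n,
      (∀ x ∈ Set.Ico (j n) (j (n + 1)), ∃ σ : List Bool, σ.length = m ∧ x ∈ T n σ) ∧
      ∀ σ τ : List Bool, σ.length = m → τ.length = m → σ ≠ τ → T n σ ∩ T n τ = ∅)
    (hT2 : ∀ n, ∀ σ : List Bool, σ.length ≤ l n →
      T n σ ⊆ Set.Ico (j n) (j (n + 1)) ∧ Nat.card ↥(T n σ) = 2 ^ (l n - σ.length))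
    (hT3 : ∀ n, ∀ σ τ : List Bool, τ.length ≤ l n → σ <+: τ → T n τ ⊆ T n σ)
    (hT4 : ∀ n, ∀ σ : List Bool, σ.length ≤ l n → ∀ x ∈ T n σ, ∀ y ∈ T n σ, x ≠ y →
      (2 : ℝ) ^ ((σ.length : ℤ) - 1) < |(x : ℝ) - (y : ℝ)|) :
    ∃ f : (Cardinal.aleph 1).ord.ToType → (ℕ → ℕ),
      (∀ α, ∀ n,
        (∀ m < l n, ∃ σ : List Bool, σ.length = m + 1 ∧
          {k ∈ Set.Ico (j n) (j (n + 1)) | f α k = m} = T n σ) ∧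
        (∃ τ : List Bool, τ.length = l n ∧
          {k ∈ Set.Ico (j n) (j (n + 1)) | f α k = l n} = T n τ)) ∧
      ∀ (i m : ℕ), m ≤ 2 ^ i →
        ∀ F : Finset (Cardinal.aleph 1).ord.ToType, F.card = m →
          ∃ B : Set ℕ, B.Infinite ∧ B ⊆ Set.Ici i ∧
            ∀ α ∈ F, ∀ β ∈ F, α ≠ β → ∀ n ∈ B,
              {k ∈ Set.Ico (j n) (j (n + 1)) | i ≤ f α k} ≠
                {k ∈ Set.Ico (j n) (j (n + 1)) | i ≤ f β k} := by
  classical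
  obtain ⟨ι⟩ := aleph1_embed_cantor
  -- basic facts about the tree system
  have hTempty : ∀ n, T n [] = Set.Ico (j n) (j (n + 1)) := by
    intro n
    obtain ⟨hsub, hcardT⟩ := hT2 n [] (by simp)
    have h1 : (Set.Ico (j n) (j (n + 1))).ncard = 2 ^ l n := by
      rw [← Finset.coe_Ico, Set.ncard_coe_finset, Nat.card_Ico, (hl n).2.2]
    have h2 : (T n []).ncard = 2 ^ l n := by
      rw [← Nat.card_coe_set_eq, hcardT]; simp
    exact Set.eq_of_subset_of_ncard_le hsub (by rw [h1, h2]) (Set.finite_Ico _ _)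
  have hfin : ∀ n σ, σ.length ≤ l n → (T n σ).Finite :=
    fun n σ h => (Set.finite_Ico _ _).subset (hT2 n σ h).1
  have hncard : ∀ n (σ : List Bool), σ.length ≤ l n →
      (T n σ).ncard = 2 ^ (l n - σ.length) :=
    fun n σ h => by rw [← Nat.card_coe_set_eq]; exact (hT2 n σ h).2
  -- the level function satisfies: level-≥-i set is T n (pre i)
  have hcode : ∀ (x : ℕ → Bool) (n i : ℕ), i ≤ l n →
      {k ∈ Set.Ico (j n) (j (n + 1)) | i ≤ lev12 j l T x k} = T n (pre12 x n i) := by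
    intro x n i hi
    have hlen : (pre12 x n i).length ≤ l n := by rw [pre12_length]; exact hi
    ext k
    simp only [Set.mem_sep_iff, Set.mem_setOf_eq]
    constructor
    · rintro ⟨hk, hle⟩
      have hidx := idx12_eq hj0 hj hk
      have hP : k ∈ T (idx12 j k) (pre12 x (idx12 j k) (lev12 j l T x k)) := by
        rcases Nat.eq_zero_or_pos (lev12 j l T x k) with h0 | hpos
        · rw [h0]
          have hp0 : pre12 x (idx12 j k) 0 = [] := by simp [pre12]
          rw [hp0, hidx, hTempty n]; exact hk
        · have hne0 : lev12 j l T x k ≠ 0 := Nat.pos_iff_ne_zero.1 hpos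
          exact Nat.findGreatest_of_ne_zero
            (P := fun i => k ∈ T (idx12 j k) (pre12 x (idx12 j k) i))
            (n := l (idx12 j k)) (m := lev12 j l T x k)
            (by unfold lev12; rfl) hne0
      rw [hidx] at hP
      have hlevle : lev12 j l T x k ≤ l n := by
        have h3 : lev12 j l T x k ≤ l (idx12 j k) := by
          unfold lev12; exact Nat.findGreatest_le _
        rwa [hidx] at h3
      exact hT3 n _ _ (by rw [pre12_length]; exact hlevle) (pre12_prefix hle) hP
    · intro hmem
      have hk : k ∈ Set.Ico (j n) (j (n + 1)) := (hT2 n _ hlen).1 hmem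
      refine ⟨hk, ?_⟩
      have hidx := idx12_eq hj0 hj hk
      unfold lev12
      rw [hidx]
      exact Nat.le_findGreatest hi hmem
  -- the diff of consecutive code sets is the sibling node
  have hdiff : ∀ (x : ℕ → Bool) n m, m < l n →
      T n (pre12 x n m) \ T n (pre12 x n (m + 1)) =
        T n (pre12 x n m ++ [!(val12 x n).testBit m]) := by
    intro x n m hm
    have hm1 : m + 1 ≤ l n := hm
    set b := (val12 x n).testBit m with hb
    have hlen0 : (pre12 x n m ++ [b]).length = m + 1 := by simp [pre12_length]
    have hlen1 : (pre12 x n m ++ [!b]).length = m + 1 := by simp [pre12_length]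
    have hnel : pre12 x n m ++ [b] ≠ pre12 x n m ++ [!b] := by
      intro h
      have := List.append_cancel_left h
      simp at this
    have hdisj := (hT1 n (m + 1) hm1).2 _ _ hlen0 hlen1 hnel
    have hsub0 : T n (pre12 x n m ++ [b]) ⊆ T n (pre12 x n m) :=
      hT3 n _ _ (le_of_eq_of_le hlen0 hm1) (List.prefix_append _ _)
    have hsub1 : T n (pre12 x n m ++ [!b]) ⊆ T n (pre12 x n m) :=
      hT3 n _ _ (le_of_eq_of_le hlen1 hm1) (List.prefix_append _ _)
    rw [pre12_succ x n m, ← hb]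
    have hlenm : (pre12 x n m).length ≤ l n := by rw [pre12_length]; omega
    have hfinP := hfin n (pre12 x n m) hlenm
    have hsub1' : T n (pre12 x n m ++ [!b]) ⊆
        T n (pre12 x n m) \ T n (pre12 x n m ++ [b]) := by
      intro k hk
      refine ⟨hsub1 hk, fun hk0 => ?_⟩
      have hkk : k ∈ T n (pre12 x n m ++ [b]) ∩ T n (pre12 x n m ++ [!b]) := ⟨hk0, hk⟩
      rw [hdisj] at hkk; exact hkk
    refine (Set.eq_of_subset_of_ncard_le hsub1' ?_ hfinP.diff).symm
    rw [Set.ncard_diff hsub0 (hfin n _ (le_of_eq_of_le hlen0 hm1)),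
      hncard n _ hlenm, hncard n _ (le_of_eq_of_le hlen0 hm1),
      hncard n _ (le_of_eq_of_le hlen1 hm1), pre12_length, hlen0, hlen1]
    have h5 : l n - m = (l n - (m + 1)) + 1 := by omega
    rw [h5, pow_succ]
    omega
  have hbullet2 : ∀ (x : ℕ → Bool) n,
      {k ∈ Set.Ico (j n) (j (n + 1)) | lev12 j l T x k = l n} = T n (pre12 x n (l n)) := by
    intro x n
    rw [← hcode x n (l n) le_rfl]
    ext k
    simp only [Set.mem_sep_iff, Set.mem_setOf_eq]
    constructor
    · rintro ⟨hk, he⟩; exact ⟨hk, le_of_eq he.symm⟩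
    · rintro ⟨hk, hle⟩
      refine ⟨hk, le_antisymm ?_ hle⟩
      have hidx := idx12_eq hj0 hj hk
      have h3 : lev12 j l T x k ≤ l (idx12 j k) := by
        unfold lev12; exact Nat.findGreatest_le _
      rwa [hidx] at h3
  have hbullet1 : ∀ (x : ℕ → Bool) n m, m < l n →
      {k ∈ Set.Ico (j n) (j (n + 1)) | lev12 j l T x k = m} =
        T n (pre12 x n m) \ T n (pre12 x n (m + 1)) := by
    intro x n m hm
    rw [← hcode x n m (le_of_lt hm), ← hcode x n (m + 1) hm]
    ext k
    simp only [Set.mem_sep_iff, Set.mem_diff, Set.mem_setOf_eq]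
    constructor
    · rintro ⟨hk, he⟩
      exact ⟨⟨hk, by omega⟩, fun h => by omega⟩
    · rintro ⟨⟨hk, h1'⟩, h2'⟩
      refine ⟨hk, ?_⟩
      have h4 : ¬(m + 1 ≤ lev12 j l T x k) := fun hc => h2' ⟨hk, hc⟩
      omega
  refine ⟨fun α => lev12 j l T (ι α), fun α n => ⟨fun m hm => ?_, ?_⟩, ?_⟩
  · exact ⟨pre12 (ι α) n m ++ [!(val12 (ι α) n).testBit m],
      by simp [pre12_length],
      by beta_reduce; rw [hbullet1 (ι α) n m hm, hdiff (ι α) n m hm]⟩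
  · exact ⟨pre12 (ι α) n (l n), pre12_length _ _ _, hbullet2 (ι α) n⟩
  · intro i m hm F hF
    have hexN : ∀ p : F.offDiag, ∃ s : ℕ, ι p.1.1 s ≠ ι p.1.2 s := by
      rintro ⟨⟨α, β⟩, hp⟩
      have hne : α ≠ β := (Finset.mem_offDiag.1 hp).2.2
      by_contra hcon
      push_neg at hcon
      exact hne (ι.injective (funext hcon))
    set N : ℕ := (F.offDiag.attach.sup fun p => Nat.find (hexN p)) + 1 with hN
    have hNsep : ∀ α ∈ F, ∀ β ∈ F, α ≠ β → ∃ s, s < N ∧ ι α s ≠ ι β s := by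
      intro α hα β hβ hne
      have hp : (α, β) ∈ F.offDiag := Finset.mem_offDiag.2 ⟨hα, hβ, hne⟩
      refine ⟨Nat.find (hexN ⟨(α, β), hp⟩), ?_, Nat.find_spec (hexN ⟨(α, β), hp⟩)⟩
      have hle2 : Nat.find (hexN ⟨(α, β), hp⟩) ≤
          F.offDiag.attach.sup fun p => Nat.find (hexN p) :=
        by exact Finset.le_sup (f := fun p => Nat.find (hexN p)) (Finset.mem_attach _ _)
      omega
    set rN : (Cardinal.aleph 1).ord.ToType → (Fin N → Bool) :=
      fun α => fun t => ι α t.val with hrN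
    set S : Finset (Fin N → Bool) := F.image rN with hS
    have hScard : S.card ≤ 2 ^ i :=
      le_trans Finset.card_image_le (by rw [hF]; exact hm)
    have hpow : 0 < 2 ^ i := pow_pos (by norm_num) i
    set e : (Fin N → Bool) → Fin (2 ^ i) := fun y =>
      if h : y ∈ S then Fin.castLE hScard (S.equivFin ⟨y, h⟩) else ⟨0, hpow⟩ with he'
    have he : ∀ y ∈ S, ∀ z ∈ S, y ≠ z → e y ≠ e z := by
      intro y hy z hz hne heq
      rw [he'] at heq
      simp only [dif_pos hy, dif_pos hz] at heq
      exact hne (Subtype.mk_eq_mk.1 (S.equivFin.injective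
        (Fin.castLE_injective hScard heq)))
    refine ⟨{n | phi12 n = ⟨i, N, e⟩} ∩ Set.Ici i, ?_, Set.inter_subset_right, ?_⟩
    · have h1 := (phi12_infinite ⟨i, N, e⟩).diff (Set.finite_Iio i)
      have h2 : {n | phi12 n = (⟨i, N, e⟩ : Con12)} \ Set.Iio i =
          {n | phi12 n = ⟨i, N, e⟩} ∩ Set.Ici i := by
        ext n; simp [Nat.not_lt]
      rwa [h2] at h1
    · intro α hα β hβ hne n hn
      obtain ⟨hphin, hni⟩ := hn
      have hni' : i ≤ n := hni
      have hiln : i ≤ l n := le_trans hni' (hl n).2.1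
      rw [hcode (ι α) n i hiln, hcode (ι β) n i hiln]
      have hval : ∀ γ, val12 (ι γ) n = (e (rN γ)).val := by
        intro γ
        unfold val12
        rw [Set.mem_setOf_eq] at hphin
        rw [hphin]
      have hvlt : ∀ γ, val12 (ι γ) n < 2 ^ i := by
        intro γ; rw [hval]; exact (e (rN γ)).isLt
      have hvne : val12 (ι α) n ≠ val12 (ι β) n := by
        rw [hval, hval]
        intro h
        obtain ⟨s, hs, hss⟩ := hNsep α hα β hβ hne
        have hrne : rN α ≠ rN β := fun hr => hss (congrFun hr ⟨s, hs⟩)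
        exact he _ (Finset.mem_image_of_mem _ hα) _ (Finset.mem_image_of_mem _ hβ)
          hrne (Fin.val_injective h)
      have hpne := pre12_ne (hvlt α) (hvlt β) hvne
      intro hTeq
      have hdisj := (hT1 n i hiln).2 _ _ (pre12_length _ _ _) (pre12_length _ _ _) hpne
      have hnonempty : (T n (pre12 (ι α) n i)).Nonempty := by
        apply Set.nonempty_of_ncard_ne_zero
        rw [hncard n _ (le_of_eq_of_le (pre12_length _ _ _) hiln)]
        positivity
      obtain ⟨k, hk⟩ := hnonempty
      have hkk : k ∈ T n (pre12 (ι α) n i) ∩ T n (pre12 (ι β) n i) := ⟨hk, hTeq ▸ hk⟩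
      rw [hdisj] at hkk; exact hkk
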